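/- Let x1, x2, y1, y2, y3 be distinct points in a set V ⊆ R^d such that {x1,y2} and {x2,y2} are double-normal pairs of V. Let ε > 0 and suppose ∠y1 y2 y3 > π − ε. Then for any unit vector u parallel to y1 − y2 and any unit vector v in the plane spanned by x1 − y2 and x2 − y2, we have |⟨u,v⟩| < 2ε / sin(∠x1 y2 x2). -/

import Mathlib

open RealInnerProductSpace Real EuclideanGeometry

section aux
variable {E : Type*} [NormedAddCommGroup E] [InnerProductSpace ℝ E]

lemma aux_coeff_bound (a b w : E) (ha : ‖a‖ = 1) (hb : ‖b‖ = 1) (hw : ‖w‖ = 1)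
    (α β : ℝ) (hvab : w = α • a + β • b) :
    |β| * Real.sqrt (1 - ⟪a, b⟫ ^ 2) ≤ 1 := by
  set c : ℝ := ⟪a, b⟫ with hc
  have haa : ⟪a, a⟫ = 1 := by rw [real_inner_self_eq_norm_sq, ha]; norm_num
  have hbb : ⟪b, b⟫ = 1 := by rw [real_inner_self_eq_norm_sq, hb]; norm_num
  have hba : ⟪b, a⟫ = c := by rw [real_inner_comm]
  have hc2 : c ^ 2 ≤ 1 := by
    have h := abs_real_inner_le_norm a b
    rw [ha, hb] at h
    nlinarith [abs_nonneg ⟪a,b⟫, sq_abs ⟪a,b⟫]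
  set e : E := b - c • a with he
  have hee : ‖e‖ ^ 2 = 1 - c ^ 2 := by
    rw [he, ← real_inner_self_eq_norm_sq]
    simp only [inner_sub_sub_self, real_inner_smul_left, real_inner_smul_right, haa, hbb, hba]
    ring
  have hve : ⟪w, e⟫ = β * (1 - c ^ 2) := by
    rw [hvab, he]
    simp only [inner_add_left, inner_sub_right, real_inner_smul_left, real_inner_smul_right,
      haa, hbb, hba, ← hc]
    ring
  have hcs : |⟪w, e⟫| ≤ ‖e‖ := by
    have := abs_real_inner_le_norm w e
    rwa [hw, one_mul] at this
  set s : ℝ := Real.sqrt (1 - c ^ 2) with hs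
  have hs2 : s ^ 2 = 1 - c ^ 2 := Real.sq_sqrt (by linarith)
  have hse : ‖e‖ = s := by
    rw [hs, ← hee]
    exact (Real.sqrt_sq (norm_nonneg e)).symm
  rcases eq_or_lt_of_le (Real.sqrt_nonneg (1 - c ^ 2)) with h0 | h0
  · have hs0 : s = 0 := by rw [hs, ← h0]
    rw [hs0, mul_zero]; norm_num
  · have h0' : 0 < s := h0
    have : |β| * s ^ 2 ≤ s := by
      calc |β| * s ^ 2 = |β * (1 - c ^ 2)| := by
            rw [abs_mul, hs2, abs_of_nonneg (show (0:ℝ) ≤ 1 - c ^ 2 by linarith)]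
          _ = |⟪w, e⟫| := by rw [hve]
          _ ≤ ‖e‖ := hcs
          _ = s := hse
    have := (mul_le_mul_iff_left₀ h0').mp (by nlinarith : (|β| * s) * s ≤ 1 * s)
    linarith
end aux

set_option maxHeartbeats 1000000 in
theorem stmt_2 {d : ℕ} (V : Set (EuclideanSpace ℝ (Fin d)))
    (x1 x2 y1 y2 y3 : EuclideanSpace ℝ (Fin d))
    (hx1 : x1 ∈ V) (hx2 : x2 ∈ V) (h1 : y1 ∈ V) (h2 : y2 ∈ V) (h3 : y3 ∈ V)
    (hdist : [x1, x2, y1, y2, y3].Pairwise (· ≠ ·))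
    (hdn1 : ∀ z ∈ V, 0 ≤ ⟪z - y2, x1 - y2⟫ ∧ 0 ≤ ⟪z - x1, y2 - x1⟫)
    (hdn2 : ∀ z ∈ V, 0 ≤ ⟪z - y2, x2 - y2⟫ ∧ 0 ≤ ⟪z - x2, y2 - x2⟫)
    {ε : ℝ} (hε : 0 < ε)
    (hang : π - ε < ∠ y1 y2 y3)
    (u v : EuclideanSpace ℝ (Fin d)) (hu : ‖u‖ = 1) (hv : ‖v‖ = 1)
    (hupar : ∃ c : ℝ, u = c • (y1 - y2))
    (hvspan : v ∈ Submodule.span ℝ {x1 - y2, x2 - y2}) :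
    |⟪u, v⟫| < 2 * ε / Real.sin (∠ x1 y2 x2) := by
  simp only [List.pairwise_cons, List.mem_cons, List.not_mem_nil, or_false,
    List.mem_singleton, List.Pairwise.nil, forall_eq_or_imp, forall_eq] at hdist
  obtain ⟨⟨hx1x2, hx1y1, hx1y2, hx1y3⟩, ⟨hx2y1, hx2y2, hx2y3⟩, ⟨hy1y2, hy1y3⟩, hy2y3, -⟩ := hdist
  set a : EuclideanSpace ℝ (Fin d) := x1 - y2 with hadef
  set b : EuclideanSpace ℝ (Fin d) := x2 - y2 with hbdef
  set p : EuclideanSpace ℝ (Fin d) := y1 - y2 with hpdef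
  set q : EuclideanSpace ℝ (Fin d) := y3 - y2 with hqdef
  have ha0 : a ≠ 0 := sub_ne_zero.mpr hx1y2
  have hb0 : b ≠ 0 := sub_ne_zero.mpr hx2y2
  have hp0 : p ≠ 0 := sub_ne_zero.mpr hy1y2
  have hq0 : q ≠ 0 := sub_ne_zero.mpr (Ne.symm hy2y3)
  have hanorm : 0 < ‖a‖ := norm_pos_iff.mpr ha0
  have hbnorm : 0 < ‖b‖ := norm_pos_iff.mpr hb0
  have hpnorm : 0 < ‖p‖ := norm_pos_iff.mpr hp0
  have hqnorm : 0 < ‖q‖ := norm_pos_iff.mpr hq0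
  have hpa : 0 ≤ ⟪p, a⟫ := (hdn1 y1 h1).1
  have hqa : 0 ≤ ⟪q, a⟫ := (hdn1 y3 h3).1
  have hpb : 0 ≤ ⟪p, b⟫ := (hdn2 y1 h1).1
  have hqb : 0 ≤ ⟪q, b⟫ := (hdn2 y3 h3).1
  have hba0 : 0 ≤ ⟪b, a⟫ := (hdn1 x2 hx2).1
  -- angles as vector angles
  have hθeq : ∠ x1 y2 x2 = InnerProductGeometry.angle a b := by
    simp [EuclideanGeometry.angle, vsub_eq_sub, hadef, hbdef]
  have hφeq : ∠ y1 y2 y3 = InnerProductGeometry.angle p q := by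
    simp [EuclideanGeometry.angle, vsub_eq_sub, hpdef, hqdef]
  -- the angle at y2 between x1 and x2 is in (0, π)
  have hθne0 : InnerProductGeometry.angle a b ≠ 0 := by
    intro h
    obtain ⟨-, r, hr, hbr⟩ := InnerProductGeometry.angle_eq_zero_iff.mp h
    have h1' : 0 ≤ ⟪x2 - x1, y2 - x1⟫ := (hdn1 x2 hx2).2
    have h2' : 0 ≤ ⟪x1 - x2, y2 - x2⟫ := (hdn2 x1 hx1).2
    have e1 : x2 - x1 = b - a := by rw [hadef, hbdef]; abel
    have e2 : y2 - x1 = -a := by rw [hadef]; abel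
    have e3 : x1 - x2 = a - b := by rw [hadef, hbdef]; abel
    have e4 : y2 - x2 = -b := by rw [hbdef]; abel
    rw [e1, e2, hbr] at h1'
    rw [e3, e4, hbr] at h2'
    have haa : ⟪a, a⟫ = ‖a‖ ^ 2 := real_inner_self_eq_norm_sq a
    have c1 : (0:ℝ) ≤ (1 - r) * ‖a‖ ^ 2 := by
      have : ⟪r • a - a, -a⟫ = (1 - r) * ‖a‖ ^ 2 := by
        simp only [inner_sub_left, inner_neg_right, real_inner_smul_left, haa]; ring
      rw [this] at h1'; linarith
    have c2 : (0:ℝ) ≤ -(r * (1 - r)) * ‖a‖ ^ 2 := by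
      have : ⟪a - r • a, -(r • a)⟫ = -(r * (1 - r)) * ‖a‖ ^ 2 := by
        simp only [inner_sub_left, inner_neg_right, real_inner_smul_left,
          real_inner_smul_right, haa]
        ring
      rw [this] at h2'; linarith
    have hr1 : r = 1 := le_antisymm (by nlinarith [pow_pos hanorm 2])
      (by nlinarith [mul_pos hr (pow_pos hanorm 2)])
    rw [hr1, one_smul] at hbr
    exact hx1x2 (by simpa [hadef, hbdef, sub_left_inj] using hbr.symm)
  have hθnepi : InnerProductGeometry.angle a b ≠ π := by
    intro h
    obtain ⟨-, r, hr, hbr⟩ := InnerProductGeometry.angle_eq_pi_iff.mp h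
    have : ⟪b, a⟫ = r * ‖a‖ ^ 2 := by
      rw [hbr, real_inner_smul_left, real_inner_self_eq_norm_sq]
    nlinarith [mul_pos hanorm hanorm]
  have hθpos : 0 < InnerProductGeometry.angle a b :=
    lt_of_le_of_ne (InnerProductGeometry.angle_nonneg a b) (Ne.symm hθne0)
  have hθltpi : InnerProductGeometry.angle a b < π :=
    lt_of_le_of_ne (InnerProductGeometry.angle_le_pi a b) hθnepi
  have hsinpos : 0 < Real.sin (∠ x1 y2 x2) := by
    rw [hθeq]; exact Real.sin_pos_of_pos_of_lt_pi hθpos hθltpi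
  have hsinle : Real.sin (∠ x1 y2 x2) ≤ 1 := Real.sin_le_one _
  -- trivial case: ε ≥ 1
  rcases le_or_gt 1 ε with hε1 | hε1
  · have huv : |⟪u, v⟫| ≤ 1 := by
      have := abs_real_inner_le_norm u v
      rwa [hu, hv, one_mul] at this
    have h2e : 2 * ε ≤ 2 * ε / Real.sin (∠ x1 y2 x2) := by
      rw [le_div_iff₀ hsinpos]
      nlinarith
    linarith
  -- main case: ε < 1
  -- normalized vectors
  set an : EuclideanSpace ℝ (Fin d) := ‖a‖⁻¹ • a with handef
  set bn : EuclideanSpace ℝ (Fin d) := ‖b‖⁻¹ • b with hbndef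
  set pn : EuclideanSpace ℝ (Fin d) := ‖p‖⁻¹ • p with hpndef
  set qn : EuclideanSpace ℝ (Fin d) := ‖q‖⁻¹ • q with hqndef
  have han : ‖an‖ = 1 := norm_smul_inv_norm ha0
  have hbn : ‖bn‖ = 1 := norm_smul_inv_norm hb0
  have hpn : ‖pn‖ = 1 := norm_smul_inv_norm hp0
  have hqn : ‖qn‖ = 1 := norm_smul_inv_norm hq0
  -- cos bound from the angle condition
  have hcoslt : Real.cos (∠ y1 y2 y3) < -Real.cos ε := by
    have hle : ∠ y1 y2 y3 ≤ π := EuclideanGeometry.angle_le_pi _ _ _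
    have := Real.cos_lt_cos_of_nonneg_of_le_pi
      (show (0:ℝ) ≤ π - ε by nlinarith [Real.pi_gt_three]) hle hang
    rwa [Real.cos_pi_sub] at this
  have hpqcos : ⟪pn, qn⟫ = Real.cos (∠ y1 y2 y3) := by
    rw [hφeq, InnerProductGeometry.cos_angle, hpndef, hqndef, real_inner_smul_left,
      real_inner_smul_right]
    field_simp
  have hpq : ⟪pn, qn⟫ < -Real.cos ε := by rw [hpqcos]; exact hcoslt
  -- small sum of normalized directions
  have hcε : 2 - 2 * Real.cos ε ≤ ε ^ 2 := by
    have hcd : Real.cos ε = 2 * Real.cos (ε/2) ^ 2 - 1 := by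
      rw [← Real.cos_two_mul]
      congr 1
      ring
    nlinarith [Real.sin_sq_add_cos_sq (ε/2),
      Real.sin_lt (show 0 < ε/2 by linarith),
      Real.sin_nonneg_of_nonneg_of_le_pi (show (0:ℝ) ≤ ε/2 by linarith)
        (show ε/2 ≤ π by nlinarith [Real.pi_gt_three])]
  have hWsq : ‖pn + qn‖ ^ 2 < ε ^ 2 := by
    rw [norm_add_sq_real, hpn, hqn]
    linarith only [hpq, hcε]
  have hW : ‖pn + qn‖ < ε := lt_of_pow_lt_pow_left₀ 2 (le_of_lt hε) hWsq
  -- inner products of pn with an, bn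
  have hpan : 0 ≤ ⟪pn, an⟫ := by
    rw [hpndef, handef, real_inner_smul_left, real_inner_smul_right]
    positivity
  have hqan : 0 ≤ ⟪qn, an⟫ := by
    rw [hqndef, handef, real_inner_smul_left, real_inner_smul_right]
    positivity
  have hpbn : 0 ≤ ⟪pn, bn⟫ := by
    rw [hpndef, hbndef, real_inner_smul_left, real_inner_smul_right]
    positivity
  have hqbn : 0 ≤ ⟪qn, bn⟫ := by
    rw [hqndef, hbndef, real_inner_smul_left, real_inner_smul_right]
    positivity
  have hsum_a : ⟪pn, an⟫ + ⟪qn, an⟫ < ε := by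
    have h1' : ⟪pn + qn, an⟫ ≤ ‖pn + qn‖ := by
      have := real_inner_le_norm (pn + qn) an
      rwa [han, mul_one] at this
    rw [inner_add_left] at h1'
    linarith only [h1', hW]
  have hsum_b : ⟪pn, bn⟫ + ⟪qn, bn⟫ < ε := by
    have h1' : ⟪pn + qn, bn⟫ ≤ ‖pn + qn‖ := by
      have := real_inner_le_norm (pn + qn) bn
      rwa [hbn, mul_one] at this
    rw [inner_add_left] at h1'
    linarith only [h1', hW]
  have hpan_lt : ⟪pn, an⟫ < ε := by linarith only [hsum_a, hqan]
  have hpbn_lt : ⟪pn, bn⟫ < ε := by linarith only [hsum_b, hqbn]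
  -- u is ± pn
  obtain ⟨cu, hcu⟩ := hupar
  have hcu' : u = cu • p := by rw [hcu, hpdef]
  have hcabs : |cu| * ‖p‖ = 1 := by
    have : ‖u‖ = |cu| * ‖p‖ := by rw [hcu', norm_smul, Real.norm_eq_abs]
    rw [← this, hu]
  have huan : |⟪u, an⟫| < ε := by
    have h1' : ⟪u, an⟫ = cu * ⟪p, an⟫ := by rw [hcu', real_inner_smul_left]
    have h2' : ⟪pn, an⟫ = ‖p‖⁻¹ * ⟪p, an⟫ := by rw [hpndef, real_inner_smul_left]
    have h3' : 0 ≤ ⟪p, an⟫ := by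
      have h4 := hpan
      rw [h2'] at h4
      exact (mul_nonneg_iff_of_pos_left (inv_pos.mpr hpnorm)).mp h4
    have : |⟪u, an⟫| = ⟪pn, an⟫ := by
      rw [h1', h2', abs_mul, abs_of_nonneg h3']
      have : |cu| = ‖p‖⁻¹ := by field_simp at hcabs ⊢; linarith [abs_nonneg cu]
      rw [this]
    rw [this]; exact hpan_lt
  have hubn : |⟪u, bn⟫| < ε := by
    have h1' : ⟪u, bn⟫ = cu * ⟪p, bn⟫ := by rw [hcu', real_inner_smul_left]
    have h2' : ⟪pn, bn⟫ = ‖p‖⁻¹ * ⟪p, bn⟫ := by rw [hpndef, real_inner_smul_left]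
    have h3' : 0 ≤ ⟪p, bn⟫ := by
      have h4 := hpbn
      rw [h2'] at h4
      exact (mul_nonneg_iff_of_pos_left (inv_pos.mpr hpnorm)).mp h4
    have : |⟪u, bn⟫| = ⟪pn, bn⟫ := by
      rw [h1', h2', abs_mul, abs_of_nonneg h3']
      have : |cu| = ‖p‖⁻¹ := by field_simp at hcabs ⊢; linarith [abs_nonneg cu]
      rw [this]
    rw [this]; exact hpbn_lt
  -- decompose v
  rw [Submodule.mem_span_pair] at hvspan
  obtain ⟨s, t, hst⟩ := hvspan
  obtain ⟨α, hαdef⟩ : ∃ x : ℝ, x = s * ‖a‖ := ⟨_, rfl⟩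
  obtain ⟨β, hβdef⟩ : ∃ x : ℝ, x = t * ‖b‖ := ⟨_, rfl⟩
  have hsa : α * ‖a‖⁻¹ = s := by rw [hαdef]; field_simp
  have htb : β * ‖b‖⁻¹ = t := by rw [hβdef]; field_simp
  have hveq : v = α • an + β • bn := by
    rw [handef, hbndef, smul_smul, smul_smul, hsa, htb, hst]
  -- sin of the angle
  set sθ : ℝ := Real.sin (∠ x1 y2 x2) with hsθdef
  have hcosab : Real.cos (∠ x1 y2 x2) = ⟪an, bn⟫ := by
    rw [hθeq, InnerProductGeometry.cos_angle, handef, hbndef, real_inner_smul_left,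
      real_inner_smul_right]
    field_simp
  have hsθ : sθ = Real.sqrt (1 - ⟪an, bn⟫ ^ 2) := by
    rw [hsθdef, hθeq, Real.sin_eq_sqrt_one_sub_cos_sq (InnerProductGeometry.angle_nonneg a b)
      (InnerProductGeometry.angle_le_pi a b), ← hθeq, hcosab]
  -- coefficient bounds
  have hβb : |β| * sθ ≤ 1 := by
    rw [hsθ]; exact aux_coeff_bound an bn v han hbn hv α β hveq
  have hαb : |α| * sθ ≤ 1 := by
    have h := aux_coeff_bound bn an v hbn han hv β α (by rw [hveq, add_comm])
    rw [hsθ]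
    have : ⟪bn, an⟫ ^ 2 = ⟪an, bn⟫ ^ 2 := by rw [real_inner_comm]
    rwa [this] at h
  -- final estimate
  have huv : ⟪u, v⟫ = α * ⟪u, an⟫ + β * ⟪u, bn⟫ := by
    rw [hveq, inner_add_right, real_inner_smul_right u an α, real_inner_smul_right u bn β]
  have habs : |⟪u, v⟫| ≤ |α| * |⟪u, an⟫| + |β| * |⟪u, bn⟫| := by
    rw [huv]
    calc |α * ⟪u, an⟫ + β * ⟪u, bn⟫| ≤ |α * ⟪u, an⟫| + |β * ⟪u, bn⟫| := abs_add_le _ _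
      _ = |α| * |⟪u, an⟫| + |β| * |⟪u, bn⟫| := by rw [abs_mul, abs_mul]
  have hαβpos : 0 < |α| + |β| := by
    rcases (abs_nonneg α).eq_or_lt with h | h
    · rcases (abs_nonneg β).eq_or_lt with h' | h'
      · exfalso
        have hα0 : α = 0 := by simpa using h.symm
        have hβ0 : β = 0 := by simpa using h'.symm
        rw [hα0, hβ0, zero_smul, zero_smul, add_zero] at hveq
        rw [hveq] at hv
        simp at hv
      · linarith
    · linarith [abs_nonneg β]
  have hstep : |α| * |⟪u, an⟫| + |β| * |⟪u, bn⟫| < (|α| + |β|) * ε := by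
    rcases (abs_nonneg α).eq_or_lt with h | h
    · rw [← h]
      have hβpos : 0 < |β| := by linarith
      have h5 := mul_lt_mul_of_pos_left hubn hβpos
      linarith only [h5]
    · have h1' : |α| * |⟪u, an⟫| < |α| * ε := mul_lt_mul_of_pos_left huan h
      have h2' : |β| * |⟪u, bn⟫| ≤ |β| * ε :=
        mul_le_mul_of_nonneg_left (le_of_lt hubn) (abs_nonneg β)
      linarith only [h1', h2']
  have hfinal : (|α| + |β|) * ε ≤ 2 * ε / sθ := by
    rw [div_eq_mul_inv]
    have hsinv : 0 < sθ⁻¹ := inv_pos.mpr hsinpos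
    have hαle : |α| ≤ sθ⁻¹ := by
      rw [← one_mul sθ⁻¹]
      calc |α| = |α| * sθ * sθ⁻¹ := by
            rw [mul_assoc, mul_inv_cancel₀ (ne_of_gt hsinpos), mul_one]
        _ ≤ 1 * sθ⁻¹ := mul_le_mul_of_nonneg_right hαb (le_of_lt hsinv)
    have hβle : |β| ≤ sθ⁻¹ := by
      rw [← one_mul sθ⁻¹]
      calc |β| = |β| * sθ * sθ⁻¹ := by
            rw [mul_assoc, mul_inv_cancel₀ (ne_of_gt hsinpos), mul_one]
        _ ≤ 1 * sθ⁻¹ := mul_le_mul_of_nonneg_right hβb (le_of_lt hsinv)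
    have h6 := mul_le_mul_of_nonneg_right (add_le_add hαle hβle) (le_of_lt hε)
    linarith only [h6]
  calc |⟪u, v⟫| ≤ |α| * |⟪u, an⟫| + |β| * |⟪u, bn⟫| := habs
    _ < (|α| + |β|) * ε := hstep
    _ ≤ 2 * ε / sθ := hfinal
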